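/- For each n ≥ 0 let π_n : L_B(n) → P send a partition (s_1, s_2, …, s_k) of n to (s_2, …, s_k). Then the images form an increasing chain: π_n(L_B(n)) ⊆ π_{n+1}(L_B(n+1)) for every n; each image π_n(L_B(n)) is a sublattice of (P, ≥_∞) (closed under inf and sup); and ⋃_{n ≥ 0} π_n(L_B(n)) = P. -/

import Mathlib

/-!
Partitions are modelled as functions `s : ℕ → ℕ` (0-based: `s 0` is the first
part `s_1`), nonincreasing and eventually zero.  A paper index `i ≥ 1`
(columns, transitions `→_i`, increments `s^{↓i}`) corresponds to the Lean
index `i - 1`.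
-/

/-- `s` is a partition: nonincreasing and eventually zero. -/
def IsPartition (s : ℕ → ℕ) : Prop :=
  (∀ i, s (i + 1) ≤ s i) ∧ ∃ N, ∀ i, N ≤ i → s i = 0

/-- `j`-th suffix sum (0-based: `suff s 0` is the total sum `|s|`,
`suff s (j-1)` is the paper's `Σ_j`). -/
noncomputable def suff (s : ℕ → ℕ) (j : ℕ) : ℕ := ∑' i, s (j + i)

/-- `s` is a partition of `n`. -/
noncomputable def IsPartOf (n : ℕ) (s : ℕ → ℕ) : Prop := IsPartition s ∧ suff s 0 = n

/-- Prefix sum of the first `j` parts. -/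
def psum (s : ℕ → ℕ) (j : ℕ) : ℕ := ∑ i ∈ Finset.range j, s i

/-- Dominance ordering: `Dom s t` means `s ≥ t`, i.e. every prefix sum of `s`
is at least the corresponding prefix sum of `t`. -/
def Dom (s t : ℕ → ℕ) : Prop := ∀ j, psum t j ≤ psum s j

/-- `s^{↓(i+1)}`: add one grain on the (0-based) `i`-th column. -/
def incr (s : ℕ → ℕ) (i : ℕ) : ℕ → ℕ := Function.update s i (s i + 1)

/-- Move one grain from column `a` to column `b` (0-based). -/
def moveGrain (s : ℕ → ℕ) (a b : ℕ) : ℕ → ℕ :=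
  fun j => if j = a then s a - 1 else if j = b then s b + 1 else s j

/-- `s` has a cliff at (0-based) column `i`: `s_i ≥ s_{i+1} + 2`. -/
def Cliff (s : ℕ → ℕ) (i : ℕ) : Prop := s (i + 1) + 2 ≤ s i

/-- `s` has a slippery step at (0-based) column `i`, the plateau ending at
(0-based) column `m`:  `s_i - 1 = s_{i+1} = ⋯ = s_m = s_{m+1} + 1` (in 0-based
indices), with `m ≥ i + 1`. -/
def SlipAt (s : ℕ → ℕ) (i m : ℕ) : Prop :=
  i + 1 ≤ m ∧ (∀ j, i + 1 ≤ j → j ≤ m → s j + 1 = s i) ∧ s (m + 1) + 2 = s i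

/-- The transition `s →_{i+1} t` of the paper (0-based `i`): a fall from a
cliff at `i`, or a slip from a slippery step at `i` (the grain landing just
after the plateau). -/
def Step (s : ℕ → ℕ) (i : ℕ) (t : ℕ → ℕ) : Prop :=
  (Cliff s i ∧ t = moveGrain s i (i + 1)) ∨
  (∃ m, SlipAt s i m ∧ t = moveGrain s i (m + 1))

/-- The set of configurations directly reachable from `s`. -/
def dirreach (s : ℕ → ℕ) : Set (ℕ → ℕ) := {t | ∃ i, Step s i t}

/-- `s` has a (slippery, if `l ≥ 2`) plateau of length `l` at `1`:
`s_1 = s_2 = ⋯ = s_l = s_{l+1} + 1`. -/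
def SlipperyPlateau1 (s : ℕ → ℕ) (l : ℕ) : Prop :=
  (∀ j, j < l → s j = s 0) ∧ s l + 1 = s 0

/-- `s` has a non-slippery plateau at `1`:
`s_1 = ⋯ = s_l ≥ s_{l+1} + 2` for some `l ≥ 2`. -/
def NonSlipperyPlateau1 (s : ℕ → ℕ) : Prop :=
  ∃ l, 2 ≤ l ∧ (∀ j, j < l → s j = s 0) ∧ s l + 2 ≤ s 0

/-- `s` has a slippery step at `1`. -/
def SlipperyStep1 (s : ℕ → ℕ) : Prop := ∃ m, SlipAt s 0 m

/-- `s` has a non-slippery step at `1`: `s_1 = s_2 + 1` and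
`s_2 = ⋯ = s_m ≥ s_{m+1} + 2` for some `m ≥ 2` (here `m` is 0-based, `≥ 1`). -/
def NonSlipperyStep1 (s : ℕ → ℕ) : Prop :=
  s 0 = s 1 + 1 ∧ ∃ m, 1 ≤ m ∧ (∀ j, 1 ≤ j → j ≤ m → s j = s 1) ∧ s (m + 1) + 2 ≤ s 1

/-- `c` is the infimum of `a` and `b` in the dominance lattice `L_B(n)`. -/
noncomputable def IsInfOn (n : ℕ) (a b c : ℕ → ℕ) : Prop :=
  IsPartOf n c ∧ Dom a c ∧ Dom b c ∧ ∀ d, IsPartOf n d → Dom a d → Dom b d → Dom c d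

/-- `c` is the supremum of `a` and `b` in the dominance lattice `L_B(n)`. -/
noncomputable def IsSupOn (n : ℕ) (a b c : ℕ → ℕ) : Prop :=
  IsPartOf n c ∧ Dom c a ∧ Dom c b ∧ ∀ d, IsPartOf n d → Dom d a → Dom d b → Dom d c

/-- The order `≥_∞` on the set `P` of all partitions: `GeInf s t` means
`s ≥_∞ t`, i.e. every suffix sum of `s` is at most that of `t`. -/
noncomputable def GeInf (s t : ℕ → ℕ) : Prop := ∀ j, suff s j ≤ suff t j

/-- `c` is the infimum of `a` and `b` in `(P, ≥_∞)`. -/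
noncomputable def IsInfP (a b c : ℕ → ℕ) : Prop :=
  IsPartition c ∧ GeInf a c ∧ GeInf b c ∧
    ∀ d, IsPartition d → GeInf a d → GeInf b d → GeInf c d

/-- `c` is the supremum of `a` and `b` in `(P, ≥_∞)`. -/
noncomputable def IsSupP (a b c : ℕ → ℕ) : Prop :=
  IsPartition c ∧ GeInf c a ∧ GeInf c b ∧
    ∀ d, IsPartition d → GeInf d a → GeInf d b → GeInf d c

/-- The map `π`: delete the first part, `(s_1, s_2, …) ↦ (s_2, …)`. -/
def shift (s : ℕ → ℕ) : ℕ → ℕ := fun i => s (i + 1)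

/-- The image `π_n(L_B(n)) ⊆ P`. -/
noncomputable def img (n : ℕ) : Set (ℕ → ℕ) := {u | ∃ s, IsPartOf n s ∧ u = shift s}
section Helpers

/-- Suffix sum as a finite sum once past the support. -/
lemma suff_eq_sum {s : ℕ → ℕ} {N : ℕ} (h : ∀ i, N ≤ i → s i = 0) (j : ℕ) :
    suff s j = ∑ i ∈ Finset.range N, s (j + i) := by
  apply tsum_eq_sum
  intro b hb
  exact h _ (by simp at hb; omega)

lemma suff_succ {s : ℕ → ℕ} (hs : IsPartition s) (j : ℕ) :
    suff s j = s j + suff s (j + 1) := by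
  obtain ⟨N, hN⟩ := hs.2
  rw [suff_eq_sum (N := N + 1) (fun i hi => hN i (by omega)) j,
      suff_eq_sum (N := N) hN (j + 1), Finset.sum_range_succ']
  simp [add_comm, add_assoc, add_left_comm]

lemma suff_zero_of_ge {s : ℕ → ℕ} {N : ℕ} (h : ∀ i, N ≤ i → s i = 0) {j : ℕ}
    (hj : N ≤ j) : suff s j = 0 := by
  rw [suff_eq_sum h j]
  exact Finset.sum_eq_zero fun i _ => h _ (by omega)

lemma part_le_zero {s : ℕ → ℕ} (hs : IsPartition s) (j : ℕ) : s j ≤ s 0 := by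
  induction j with
  | zero => exact le_rfl
  | succ k ih => exact le_trans (hs.1 k) ih

lemma suff_le_add {s : ℕ → ℕ} (hs : IsPartition s) (j : ℕ) :
    suff s 0 ≤ suff s j + j * s 0 := by
  induction j with
  | zero => simp
  | succ k ih =>
    have h1 := suff_succ hs k
    have h2 := part_le_zero hs k
    have : (k + 1) * s 0 = k * s 0 + s 0 := by ring
    omega

lemma suff_succ_le {s : ℕ → ℕ} (hs : IsPartition s) (j : ℕ) :
    suff s (j + 1) ≤ suff s j := by
  have := suff_succ hs j; omega

/-- Telescoping: the suffix sums of the difference sequence of a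
nonincreasing eventually-zero `D` recover `D`. -/
lemma suff_telescope {D : ℕ → ℕ} (hmono : ∀ j, D (j + 1) ≤ D j) {N : ℕ}
    (hN : ∀ j, N ≤ j → D j = 0) (j : ℕ) :
    suff (fun i => D i - D (i + 1)) j = D j := by
  have hanti : ∀ a b, a ≤ b → D b ≤ D a := fun a b h =>
    antitone_nat_of_succ_le hmono h
  have key : ∀ M, (∑ i ∈ Finset.range M, (D (j + i) - D (j + i + 1))) = D j - D (j + M) := by
    intro M
    induction M with
    | zero => simp
    | succ k ih =>
      rw [Finset.sum_range_succ, ih]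
      have h1 : D (j + k + 1) ≤ D (j + k) := hmono _
      have h2 : D (j + k) ≤ D j := hanti _ _ (by omega)
      have h3 : j + (k + 1) = j + k + 1 := by omega
      rw [h3]; omega
  have hz : ∀ i, N ≤ i → D i - D (i + 1) = 0 := by
    intro i hi
    have := hN i hi
    have := hN (i + 1) (by omega)
    omega
  rw [suff_eq_sum (s := fun i => D i - D (i + 1)) hz j, key]
  rcases le_or_gt N j with h | h
  · rw [hN j h, hN (j + N) (by omega)]
  · rw [hN (j + N) (by omega)]; omega

/-- Characterization of membership in `img n`. -/
lemma mem_img_iff {n : ℕ} {u : ℕ → ℕ} :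
    u ∈ img n ↔ IsPartition u ∧ suff u 0 + u 0 ≤ n := by
  constructor
  · rintro ⟨s, ⟨hs, hsum⟩, rfl⟩
    obtain ⟨N, hN⟩ := hs.2
    have hpart : IsPartition (shift s) :=
      ⟨fun i => hs.1 (i + 1), ⟨N, fun i hi => hN _ (by omega)⟩⟩
    have hshift : ∀ j, suff (shift s) j = suff s (j + 1) := by
      intro j
      rw [suff_eq_sum (s := shift s) (N := N) (fun i hi => hN _ (by omega)) j,
          suff_eq_sum (N := N) hN (j + 1)]
      apply Finset.sum_congr rfl
      intro i _
      simp [shift]; ring_nf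
    refine ⟨hpart, ?_⟩
    have h0 := suff_succ hs 0
    have h1 : shift s 0 = s 1 := rfl
    have h2 : s 1 ≤ s 0 := hs.1 0
    rw [hshift 0, h1]
    omega
  · rintro ⟨hu, hle⟩
    obtain ⟨N, hN⟩ := hu.2
    refine ⟨fun i => match i with | 0 => n - suff u 0 | (i + 1) => u i, ⟨⟨?_, ?_⟩, ?_⟩, ?_⟩
    · intro i
      match i with
      | 0 => exact (by simpa using (by omega : u 0 ≤ n - suff u 0))
      | (i + 1) => exact hu.1 i
    · exact ⟨N + 1, fun i hi => by obtain ⟨j, rfl⟩ : ∃ j, i = j + 1 := ⟨i - 1, by omega⟩; exact hN j (by omega)⟩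
    · have hs : IsPartition (fun i => match i with
        | 0 => n - suff u 0 | (i + 1) => u i) := by
        constructor
        · intro i
          match i with
          | 0 => exact (by simpa using (by omega : u 0 ≤ n - suff u 0))
          | (i + 1) => exact hu.1 i
        · exact ⟨N + 1, fun i hi => by obtain ⟨j, rfl⟩ : ∃ j, i = j + 1 := ⟨i - 1, by omega⟩; exact hN j (by omega)⟩
      rw [suff_succ hs 0]
      have : suff (fun i => match i with
        | 0 => n - suff u 0 | (i + 1) => u i) 1 = suff u 0 := by
        rw [suff_eq_sum (s := fun i => match i with
            | 0 => n - suff u 0 | (i + 1) => u i) (N := N + 1)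
            (fun i hi => by
              obtain ⟨j, rfl⟩ : ∃ j, i = j + 1 := ⟨i - 1, by omega⟩
              exact hN j (by omega)) 1,
          suff_eq_sum (N := N + 1) (fun i hi => hN i (by omega)) 0]
        apply Finset.sum_congr rfl
        intro i _
        simp [add_comm]
      rw [this]
      simp only
      omega
    · funext i; rfl

end Helpers

/-- Difference sequence of a nonincreasing, eventually-zero, convex `D`
is a partition. -/
lemma diff_partition {D : ℕ → ℕ} (hmono : ∀ j, D (j + 1) ≤ D j) {N : ℕ}
    (hN : ∀ j, N ≤ j → D j = 0) (hconv : ∀ j, 2 * D (j + 1) ≤ D j + D (j + 2)) :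
    IsPartition (fun i => D i - D (i + 1)) := by
  constructor
  · intro i
    have h1 := hmono i
    have h2 := hmono (i + 1)
    have h3 := hconv i
    simp only
    have : i + 1 + 1 = i + 2 := rfl
    rw [this]
    omega
  · refine ⟨N, fun i hi => ?_⟩
    have h1 := hN i hi
    have h2 := hN (i + 1) (by omega)
    simp only
    omega

/-- The pointwise max of the suffix-sum sequences of two partitions is the
suffix-sum sequence of a partition. -/
lemma maxD_lemma {x y : ℕ → ℕ} (hx : IsPartition x) (hy : IsPartition y) :
    ∃ d : ℕ → ℕ, IsPartition d ∧ ∀ j, suff d j = max (suff x j) (suff y j) := by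
  obtain ⟨Nx, hNx⟩ := hx.2
  obtain ⟨Ny, hNy⟩ := hy.2
  have hmono : ∀ j, max (suff x (j + 1)) (suff y (j + 1)) ≤ max (suff x j) (suff y j) :=
    fun j => max_le (le_max_of_le_left (suff_succ_le hx j))
      (le_max_of_le_right (suff_succ_le hy j))
  have hzero : ∀ j, max Nx Ny ≤ j → max (suff x j) (suff y j) = 0 := by
    intro j hj
    rw [suff_zero_of_ge hNx (le_trans (le_max_left _ _) hj),
        suff_zero_of_ge hNy (le_trans (le_max_right _ _) hj)]
    simp
  have hconv : ∀ j, 2 * max (suff x (j + 1)) (suff y (j + 1)) ≤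
      max (suff x j) (suff y j) + max (suff x (j + 2)) (suff y (j + 2)) := by
    intro j
    have hx1 := suff_succ hx j
    have hx2 := suff_succ hx (j + 1)
    have hy1 := suff_succ hy j
    have hy2 := suff_succ hy (j + 1)
    have hx3 := hx.1 j
    have hy3 := hy.1 j
    have h1 : suff x j ≤ max (suff x j) (suff y j) := le_max_left _ _
    have h2 : suff y j ≤ max (suff x j) (suff y j) := le_max_right _ _
    have h3 : suff x (j + 2) ≤ max (suff x (j + 2)) (suff y (j + 2)) := le_max_left _ _
    have h4 : suff y (j + 2) ≤ max (suff x (j + 2)) (suff y (j + 2)) := le_max_right _ _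
    have h5 : j + 1 + 1 = j + 2 := rfl
    rw [h5] at hx2 hy2
    rcases max_choice (suff x (j + 1)) (suff y (j + 1)) with hc | hc <;> rw [hc] <;> omega
  exact ⟨fun i => max (suff x i) (suff y i) - max (suff x (i + 1)) (suff y (i + 1)),
    diff_partition (D := fun j => max (suff x j) (suff y j)) hmono hzero hconv,
    suff_telescope (D := fun j => max (suff x j) (suff y j)) hmono hzero⟩

/-- The staircase partition with parts `k, k, …, k, r` of total mass `m`. -/
lemma stair_lemma (m k : ℕ) (hk0 : k = 0 → m = 0) :
    ∃ d : ℕ → ℕ, IsPartition d ∧ ∀ j, suff d j = m - min (j * k) m := by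
  have hmono : ∀ j, m - min ((j + 1) * k) m ≤ m - min (j * k) m := by
    intro j
    have h1 : (j + 1) * k = j * k + k := by ring
    omega
  have hzero : ∀ j, m + 1 ≤ j → m - min (j * k) m = 0 := by
    intro j hj
    rcases Nat.eq_zero_or_pos k with hk | hk
    · have := hk0 hk; omega
    · have : j ≤ j * k := Nat.le_mul_of_pos_right j hk
      omega
  have hconv : ∀ j, 2 * (m - min ((j + 1) * k) m) ≤
      (m - min (j * k) m) + (m - min ((j + 2) * k) m) := by
    intro j
    have h1 : (j + 1) * k = j * k + k := by ring
    have h2 : (j + 2) * k = j * k + 2 * k := by ring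
    omega
  exact ⟨fun i => (m - min (i * k) m) - (m - min ((i + 1) * k) m),
    diff_partition (D := fun j => m - min (j * k) m) hmono hzero hconv,
    suff_telescope (D := fun j => m - min (j * k) m) hmono hzero⟩

/-- The images `π_n(L_B(n))` form an increasing chain of
sublattices of `(P, ≥_∞)` whose union is all of `P`. -/
theorem stmt14 :
    (∀ n, img n ⊆ img (n + 1)) ∧
    (∀ n x y z, x ∈ img n → y ∈ img n → IsInfP x y z → z ∈ img n) ∧
    (∀ n x y z, x ∈ img n → y ∈ img n → IsSupP x y z → z ∈ img n) ∧
    (⋃ n, img n) = {u | IsPartition u} := by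
  refine ⟨?_, ?_, ?_, ?_⟩
  · intro n u hu
    rw [mem_img_iff] at hu ⊢
    exact ⟨hu.1, by omega⟩
  · -- infimum
    intro n x y z hx hy hz
    rw [mem_img_iff] at hx hy ⊢
    obtain ⟨hxp, hxn⟩ := hx
    obtain ⟨hyp, hyn⟩ := hy
    obtain ⟨hzp, hxz, hyz, hmin⟩ := hz
    obtain ⟨d, hdp, hds⟩ := maxD_lemma hxp hyp
    have hxd : GeInf x d := fun j => by rw [hds j]; exact le_max_left _ _
    have hyd : GeInf y d := fun j => by rw [hds j]; exact le_max_right _ _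
    have hzd := hmin d hdp hxd hyd
    refine ⟨hzp, ?_⟩
    have h1 := hzd 0
    rw [hds 0] at h1
    have h2 := hxz 1
    have h3 := hyz 1
    have h4 : suff z 0 = z 0 + suff z 1 := suff_succ hzp 0
    have h5 : suff x 0 = x 0 + suff x 1 := suff_succ hxp 0
    have h6 : suff y 0 = y 0 + suff y 1 := suff_succ hyp 0
    rcases max_choice (suff x 0) (suff y 0) with hc | hc <;> rw [hc] at h1 <;> omega
  · -- supremum
    intro n x y z hx hy hz
    rw [mem_img_iff] at hx hy ⊢
    obtain ⟨hxp, hxn⟩ := hx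
    obtain ⟨hyp, hyn⟩ := hy
    obtain ⟨hzp, hzx, hzy, hmax⟩ := hz
    obtain ⟨Nx, hNx⟩ := hxp.2
    set m := min (suff x 0) (suff y 0) with hm
    set k := n - m with hk
    have hm1 : m ≤ suff x 0 := min_le_left _ _
    have hm2 : m ≤ suff y 0 := min_le_right _ _
    have hsx0 : suff x 0 = x 0 + suff x 1 := suff_succ hxp 0
    have hsy0 : suff y 0 = y 0 + suff y 1 := suff_succ hyp 0
    have hkx : x 0 ≤ k := by omega
    have hky : y 0 ≤ k := by omega
    have hk0 : k = 0 → m = 0 := by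
      intro h
      have h1 := suff_le_add hxp Nx
      have h2 := suff_zero_of_ge hNx (le_refl Nx)
      have h3 : Nx * x 0 = 0 := by
        have : x 0 = 0 := by omega
        rw [this]; ring
      omega
    obtain ⟨d, hdp, hds⟩ := stair_lemma m k hk0
    have hdx : GeInf d x := by
      intro j
      rw [hds j]
      have h1 := suff_le_add hxp j
      have h2 : j * x 0 ≤ j * k := Nat.mul_le_mul_left j hkx
      omega
    have hdy : GeInf d y := by
      intro j
      rw [hds j]
      have h1 := suff_le_add hyp j
      have h2 : j * y 0 ≤ j * k := Nat.mul_le_mul_left j hky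
      omega
    have hdz := hmax d hdp hdx hdy
    refine ⟨hzp, ?_⟩
    have h1 := hdz 1
    rw [hds 1, one_mul] at h1
    have h2 := hzx 0
    have h3 := hzy 0
    have h4 : suff z 0 = z 0 + suff z 1 := suff_succ hzp 0
    omega
  · ext u
    simp only [Set.mem_iUnion, Set.mem_setOf_eq]
    constructor
    · rintro ⟨n, hn⟩
      exact (mem_img_iff.mp hn).1
    · intro hu
      exact ⟨suff u 0 + u 0, mem_img_iff.mpr ⟨hu, le_rfl⟩⟩
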